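/- Let K be a field, g an automorphism of K(x) over k induced by a field automorphism g of K of order 2 applied to coefficients, and let a ∈ K, P ∈ K(x)*. The pair condition 'a^g = a and P(x)·P^g(x) = a' is preserved under specialization: if P = A/B with A, B ∈ K[x] coprime, then B has no roots in the fixed field k* of g, and for every μ ∈ k*, the constant λ = P(μ) ∈ K satisfies λ·λ^g = a. -/

import Mathlib

/-- Let `g` be an order-2 automorphism of a field `K`, acting coefficient-wise on
`K[x]` and `K(x)`. Suppose `a ∈ K` is `g`-fixed and `P = A / B ∈ K(x)*` (with
`A, B ∈ K[x]` coprime, nonzero) satisfies `P · P^g = a`, i.e.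
`A · A^g = a · B · B^g`. Then `B` has no roots in the nonzero elements of the fixed
field of `g`, and for every such `μ` the constant `λ = P(μ) = A(μ)/B(μ)` satisfies
`λ · λ^g = a`. -/
theorem specialization_preserves_norm_condition {K : Type*} [Field K]
    (g : K ≃+* K) (hg2 : ∀ x, g (g x) = x) (hgne : (g : K → K) ≠ id)
    (a : K) (ha : g a = a)
    (A B : Polynomial K) (hA : A ≠ 0) (hB : B ≠ 0) (hcop : IsCoprime A B)
    (hrel : A * A.map (g : K →+* K)
      = Polynomial.C a * (B * B.map (g : K →+* K))) :
    ∀ μ : K, g μ = μ → μ ≠ 0 →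
      B.eval μ ≠ 0 ∧
      (A.eval μ / B.eval μ) * g (A.eval μ / B.eval μ) = a := by
  intro μ hμ hμ0
  have key : ∀ p : Polynomial K, (p.map (g : K →+* K)).eval μ = g (p.eval μ) := by
    intro p
    have h := Polynomial.eval₂_hom (g : K →+* K) μ (p := p)
    simp only [RingHom.coe_coe, hμ] at h
    rw [Polynomial.eval_map, h]
  have heval : A.eval μ * g (A.eval μ) = a * (B.eval μ * g (B.eval μ)) := by
    have := congrArg (Polynomial.eval μ) hrel
    simpa [key] using this
  have hBμ : B.eval μ ≠ 0 := by
    intro h0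
    have hAμ : A.eval μ = 0 := by
      have : A.eval μ * g (A.eval μ) = 0 := by rw [heval, h0]; ring
      rcases mul_eq_zero.mp this with h | h
      · exact h
      · have := hg2 (A.eval μ)
        rw [h, map_zero] at this
        exact this.symm
    obtain ⟨u, v, huv⟩ := hcop
    have := congrArg (Polynomial.eval μ) huv
    simp [hAμ, h0] at this
  refine ⟨hBμ, ?_⟩
  have hgB : g (B.eval μ) ≠ 0 := by
    intro h
    exact hBμ (g.injective (by simpa using h))
  rw [map_div₀]
  field_simp
  linear_combination heval
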